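/- Let F be a field and n > 1 such that for every k > 1 dividing n, every polynomial of degree k over F is reducible (F is k-closed for all divisors k > 1 of n). Then the only irreducible subalgebra of M_n(F) is M_n(F). -/

import Mathlib

open Polynomial

theorem factor_lemma {R A B C : Type*} [CommRing R] [AddCommGroup A] [Module R A]
    [AddCommGroup B] [Module R B] [AddCommGroup C] [Module R C]
    (f : A →ₗ[R] B) (g : A →ₗ[R] C) (hf : Function.Surjective f)
    (h : LinearMap.ker f ≤ LinearMap.ker g) :
    ∃ φ : B →ₗ[R] C, ∀ a, φ (f a) = g a := by
  refine ⟨((LinearMap.ker f).liftQ g h).comp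
    (f.quotKerEquivOfSurjective hf).symm.toLinearMap, fun a => ?_⟩
  have h1 : (f.quotKerEquivOfSurjective hf).symm (f a) = Submodule.Quotient.mk a := by
    apply (f.quotKerEquivOfSurjective hf).injective
    simp only [LinearEquiv.apply_symm_apply]
    rfl
  simp [h1, Submodule.liftQ_apply]

section
variable {F : Type*} [Field F] {n : ℕ}
  (𝒜 : NonUnitalSubalgebra F (Matrix (Fin n) (Fin n) F))

theorem burn_ker (hA : ∃ A ∈ 𝒜, A ≠ 0)
    (hinv : ∀ W : Submodule F (Fin n → F),
      (∀ A ∈ 𝒜, ∀ x ∈ W, A.mulVec x ∈ W) → W = ⊥ ∨ W = ⊤)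
    (v : Fin n → F) (hv : ∀ T ∈ 𝒜, T.mulVec v = 0) : v = 0 := by
  obtain ⟨A, hAm, hA0⟩ := hA
  set W : Submodule F (Fin n → F) :=
    { carrier := {x | ∀ T ∈ 𝒜, T.mulVec x = 0}
      add_mem' := by
        intro a b ha hb T hT
        simp [Matrix.mulVec_add, ha T hT, hb T hT]
      zero_mem' := by intro T hT; simp
      smul_mem' := by
        intro c a ha T hT
        simp [Matrix.mulVec_smul, ha T hT] } with hWdef
  have hWinv : ∀ B ∈ 𝒜, ∀ x ∈ W, B.mulVec x ∈ W := by
    intro B hB x hx T hT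
    rw [Matrix.mulVec_mulVec]
    exact hx _ (mul_mem hT hB)
  rcases hinv W hWinv with h | h
  · have hvW : v ∈ W := hv
    rwa [h, Submodule.mem_bot] at hvW
  · exfalso
    apply hA0
    ext i j
    have h1 : (Pi.single j 1 : Fin n → F) ∈ W := h ▸ Submodule.mem_top
    have h2 : A.mulVec (Pi.single j 1) = 0 := h1 A hAm
    have := congrFun h2 i
    simpa [Matrix.mulVec_single] using this

theorem burn_trans (hA : ∃ A ∈ 𝒜, A ≠ 0)
    (hinv : ∀ W : Submodule F (Fin n → F),
      (∀ A ∈ 𝒜, ∀ x ∈ W, A.mulVec x ∈ W) → W = ⊥ ∨ W = ⊤)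
    (v : Fin n → F) (hv : v ≠ 0) (w : Fin n → F) :
    ∃ T ∈ 𝒜, T.mulVec v = w := by
  let f : Matrix (Fin n) (Fin n) F →ₗ[F] (Fin n → F) :=
    { toFun := fun T => T.mulVec v
      map_add' := fun a b => Matrix.add_mulVec a b v
      map_smul' := fun c a => Matrix.smul_mulVec c a v }
  set W := (𝒜.toSubmodule).map f with hWdef
  have hWinv : ∀ B ∈ 𝒜, ∀ x ∈ W, B.mulVec x ∈ W := by
    intro B hB x hx
    rw [hWdef, Submodule.mem_map] at hx
    obtain ⟨T, hT, rfl⟩ := hx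
    exact ⟨B * T, (show B * T ∈ 𝒜 from mul_mem hB hT), by simp [f, Matrix.mulVec_mulVec]⟩
  rcases hinv W hWinv with h | h
  · exfalso
    apply hv
    apply burn_ker 𝒜 hA hinv
    intro T hT
    have : f T ∈ W := Submodule.mem_map_of_mem hT
    rw [h, Submodule.mem_bot] at this
    exact this
  · have hw : w ∈ W := h ▸ Submodule.mem_top
    rw [hWdef, Submodule.mem_map] at hw
    obtain ⟨T, hT, hTw⟩ := hw
    exact ⟨T, hT, hTw⟩

theorem burn_comm (hn : 1 < n)
    (hyp : ∀ k : ℕ, 1 < k → k ∣ n →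
      ∀ f : Polynomial F, f.natDegree = k → ¬ Irreducible f)
    (hA : ∃ A ∈ 𝒜, A ≠ 0)
    (hinv : ∀ W : Submodule F (Fin n → F),
      (∀ A ∈ 𝒜, ∀ x ∈ W, A.mulVec x ∈ W) → W = ⊥ ∨ W = ⊤)
    (φ : Module.End F (Fin n → F))
    (hφ : ∀ T ∈ 𝒜, ∀ x, φ (T.mulVec x) = T.mulVec (φ x)) :
    ∃ c : F, φ = c • LinearMap.id := by
  classical
  have hn0 : 0 < n := lt_trans one_pos hn
  -- the commutant subalgebra
  set C : Subalgebra F (Module.End F (Fin n → F)) :=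
    { carrier := {ψ | ∀ T ∈ 𝒜, ∀ x, ψ (T.mulVec x) = T.mulVec (ψ x)}
      mul_mem' := by
        intro ψ₁ ψ₂ h1 h2 T hT x
        show ψ₁ (ψ₂ (T.mulVec x)) = T.mulVec (ψ₁ (ψ₂ x))
        rw [h2 T hT, h1 T hT]
      add_mem' := by
        intro ψ₁ ψ₂ h1 h2 T hT x
        show ψ₁ (T.mulVec x) + ψ₂ (T.mulVec x) = T.mulVec (ψ₁ x + ψ₂ x)
        rw [h1 T hT, h2 T hT, Matrix.mulVec_add]
      algebraMap_mem' := by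
        intro c T hT x
        show c • T.mulVec x = T.mulVec (c • x)
        rw [Matrix.mulVec_smul] } with hCdef
  have hφC : φ ∈ C := hφ
  -- Schur's lemma: nonzero members of the commutant are injective
  have hSchur : ∀ ψ ∈ C, ψ ≠ 0 → Function.Injective ψ := by
    intro ψ hψ hψ0
    have hker : ∀ B ∈ 𝒜, ∀ x ∈ LinearMap.ker ψ, B.mulVec x ∈ LinearMap.ker ψ := by
      intro B hB x hx
      rw [LinearMap.mem_ker] at hx ⊢
      rw [hψ B hB x, hx, Matrix.mulVec_zero]
    rcases hinv _ hker with h | h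
    · rw [← LinearMap.ker_eq_bot]; exact h
    · exact absurd (LinearMap.ker_eq_top.mp h) hψ0
  haveI : NeZero n := ⟨by omega⟩
  have hint : IsIntegral F φ := IsIntegral.of_finite F φ
  set μ := minpoly F φ with hμdef
  have hμmonic : μ.Monic := minpoly.monic hint
  have hμ0 : μ ≠ 0 := hμmonic.ne_zero
  have hdpos : 0 < μ.natDegree := minpoly.natDegree_pos hint
  have hCp : ∀ p : F[X], aeval φ p ∈ C :=
    fun p => Algebra.adjoin_le (Set.singleton_subset_iff.2 hφC)
      (Polynomial.aeval_mem_adjoin_singleton F φ)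
  have hinj : ∀ p : F[X], p ≠ 0 → p.natDegree < μ.natDegree →
      Function.Injective (aeval φ p) := by
    intro p hp0 hpd
    apply hSchur _ (hCp p)
    intro h0
    have : μ ∣ p := minpoly.dvd F φ h0
    have := Polynomial.natDegree_le_of_dvd this hp0
    omega
  -- μ is irreducible
  have hμirr : Irreducible μ := by
    constructor
    · intro hu
      have := Polynomial.natDegree_eq_zero_of_isUnit hu
      omega
    · intro a b hab
      by_contra hcon
      push_neg at hcon
      obtain ⟨ha, hb⟩ := hcon
      have hab0 : a * b ≠ 0 := hab ▸ hμ0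
      have ha0 : a ≠ 0 := fun h => hab0 (by simp [h])
      have hb0 : b ≠ 0 := fun h => hab0 (by simp [h])
      have hdeg : ∀ p : F[X], p ≠ 0 → ¬ IsUnit p → 0 < p.natDegree := by
        intro p hp0 hpu
        rcases Nat.eq_zero_or_pos p.natDegree with h | h
        · exfalso
          apply hpu
          rw [Polynomial.isUnit_iff_degree_eq_zero, Polynomial.degree_eq_natDegree hp0, h]
          rfl
        · exact h
      have had : 0 < a.natDegree := hdeg a ha0 ha
      have hbd : 0 < b.natDegree := hdeg b hb0 hb
      have hsum : μ.natDegree = a.natDegree + b.natDegree := by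
        rw [hab, Polynomial.natDegree_mul ha0 hb0]
      have hia : Function.Injective (aeval φ a) := hinj a ha0 (by omega)
      have hib : Function.Injective (aeval φ b) := hinj b hb0 (by omega)
      have hzero : aeval φ (a * b) = 0 := by rw [← hab]; exact minpoly.aeval F φ
      rw [map_mul] at hzero
      have hcomp : Function.Injective (aeval φ a * aeval φ b) := by
        intro x y hxy
        exact hib (hia hxy)
      rw [hzero] at hcomp
      obtain ⟨x, y, hxy⟩ := exists_pair_ne (Fin n → F)
      exact hxy (hcomp (by simp))
  -- the degree of μ divides n
  haveI : Fact (Irreducible μ) := ⟨hμirr⟩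
  letI : CommRing (Algebra.adjoin F ({φ} : Set (Module.End F (Fin n → F)))) :=
    Algebra.adjoinCommRingOfComm F (by
      rintro a rfl b rfl
      rfl)
  let ρ' : AdjoinRoot μ →ₐ[F] Algebra.adjoin F ({φ} : Set (Module.End F (Fin n → F))) :=
    AdjoinRoot.liftAlgHom μ (Algebra.ofId F _) ⟨φ, Algebra.self_mem_adjoin_singleton F φ⟩ (by
      change Polynomial.aeval _ μ = 0
      apply Subtype.ext
      rw [Polynomial.aeval_subalgebra_coe μ]
      exact minpoly.aeval F φ)
  let ρ : AdjoinRoot μ →+* Module.End F (Fin n → F) :=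
    ((Algebra.adjoin F ({φ} : Set (Module.End F (Fin n → F)))).val.toRingHom).comp ρ'.toRingHom
  letI : Module (AdjoinRoot μ) (Fin n → F) := Module.compHom _ ρ
  have hsmul : ∀ (y : AdjoinRoot μ) (m : Fin n → F), y • m = ρ y m := fun _ _ => rfl
  haveI : IsScalarTower F (AdjoinRoot μ) (Fin n → F) := by
    constructor
    intro c y m
    show (c • y) • m = c • (y • m)
    rw [hsmul, hsmul, Algebra.smul_def, map_mul]
    have hc : ρ (algebraMap F (AdjoinRoot μ) c) = algebraMap F (Module.End F (Fin n → F)) c := by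
      show ((Algebra.adjoin F ({φ} : Set (Module.End F (Fin n → F)))).val
        (ρ' (algebraMap F (AdjoinRoot μ) c))) = _
      rw [AlgHom.commutes, AlgHom.commutes]
    rw [Module.End.mul_apply, hc, Module.algebraMap_end_eq_smul_id]
    simp
  have h1 : Module.finrank F (AdjoinRoot μ) * Module.finrank (AdjoinRoot μ) (Fin n → F)
      = Module.finrank F (Fin n → F) :=
    Module.finrank_mul_finrank F (AdjoinRoot μ) (Fin n → F)
  have h2 : Module.finrank F (AdjoinRoot μ) = μ.natDegree := by
    rw [(AdjoinRoot.powerBasis hμ0).finrank, AdjoinRoot.powerBasis_dim]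
  have h3 : Module.finrank F (Fin n → F) = n := Module.finrank_fin_fun F
  have hdvd : μ.natDegree ∣ n := ⟨Module.finrank (AdjoinRoot μ) (Fin n → F), by
    rw [← h2, h1, h3]⟩
  -- conclude : μ has degree 1
  have hd1 : μ.natDegree = 1 := by
    by_contra h
    exact hyp _ (by omega) hdvd μ rfl hμirr
  refine ⟨-μ.coeff 0, ?_⟩
  have h := minpoly.aeval F φ
  rw [show minpoly F φ = μ from rfl, hμmonic.eq_X_add_C hd1, map_add, aeval_X, aeval_C,
    Module.algebraMap_end_eq_smul_id] at h
  have h4 := eq_neg_of_add_eq_zero_left h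
  rw [h4]
  exact (neg_smul _ _).symm

theorem burn_dense (hn : 1 < n)
    (hyp : ∀ k : ℕ, 1 < k → k ∣ n →
      ∀ f : Polynomial F, f.natDegree = k → ¬ Irreducible f)
    (hA : ∃ A ∈ 𝒜, A ≠ 0)
    (hinv : ∀ W : Submodule F (Fin n → F),
      (∀ A ∈ 𝒜, ∀ x ∈ W, A.mulVec x ∈ W) → W = ⊥ ∨ W = ⊤) :
    ∀ (k : ℕ) (v : Fin k → (Fin n → F)), LinearIndependent F v →
      ∀ w : Fin k → (Fin n → F), ∃ T ∈ 𝒜, ∀ i, T.mulVec (v i) = w i := by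
  intro k
  induction k with
  | zero =>
    intro v _ w
    obtain ⟨A, hAm, _⟩ := hA
    exact ⟨A, hAm, fun i => i.elim0⟩
  | succ k ih =>
    intro v hv w
    have hvk : LinearIndependent F (fun i : Fin k => v i.castSucc) :=
      hv.comp _ (Fin.castSucc_injective k)
    classical
    have hmm : ∀ (B T : Matrix (Fin n) (Fin n) F), B ∈ 𝒜 → T ∈ 𝒜 → B * T ∈ 𝒜 :=
      fun B T hB hT => mul_mem hB hT
    let Φr : 𝒜.toSubmodule →ₗ[F] (Fin k → (Fin n → F)) :=
      { toFun := fun T i => (T : Matrix (Fin n) (Fin n) F).mulVec (v i.castSucc)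
        map_add' := by intro a b; funext i; simp [Matrix.add_mulVec]
        map_smul' := by intro c a; funext i; simp [Matrix.smul_mulVec]}
    let Ψr : 𝒜.toSubmodule →ₗ[F] (Fin n → F) :=
      { toFun := fun T => (T : Matrix (Fin n) (Fin n) F).mulVec (v (Fin.last k))
        map_add' := by intro a b; simp [Matrix.add_mulVec]
        map_smul' := by intro c a; simp [Matrix.smul_mulVec] }
    have hΦsurj : Function.Surjective Φr := by
      intro x
      obtain ⟨T, hT, hTx⟩ := ih _ hvk x
      exact ⟨⟨T, hT⟩, funext hTx⟩
    set W : Submodule F (Fin n → F) := (LinearMap.ker Φr).map Ψr with hWdef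
    have hWinv : ∀ B ∈ 𝒜, ∀ x ∈ W, B.mulVec x ∈ W := by
      intro B hB x hx
      rw [hWdef, Submodule.mem_map] at hx
      obtain ⟨⟨T, hT⟩, hker, rfl⟩ := hx
      rw [LinearMap.mem_ker] at hker
      refine ⟨⟨B * T, hmm B T hB hT⟩, LinearMap.mem_ker.mpr ?_, ?_⟩
      · funext i
        have h2 := congrFun hker i
        simp only [Pi.zero_apply] at h2
        show (B * T).mulVec (v i.castSucc) = 0
        rw [← Matrix.mulVec_mulVec]
        simp only [Φr, LinearMap.coe_mk, AddHom.coe_mk] at h2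
        rw [h2, Matrix.mulVec_zero]
      · show (B * T).mulVec (v (Fin.last k)) = B.mulVec (Ψr ⟨T, hT⟩)
        rw [← Matrix.mulVec_mulVec]
        rfl
    rcases hinv W hWinv with hbot | htop
    · -- contradiction with linear independence
      exfalso
      have hker : LinearMap.ker Φr ≤ LinearMap.ker Ψr := by
        intro T hT
        rw [LinearMap.mem_ker]
        have h3 : Ψr T ∈ W := Submodule.mem_map_of_mem hT
        rw [hbot, Submodule.mem_bot] at h3
        exact h3
      obtain ⟨φ, hfac⟩ := factor_lemma Φr Ψr hΦsurj hker
      have key : ∀ B ∈ 𝒜, ∀ y : Fin k → (Fin n → F),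
          φ (fun i => B.mulVec (y i)) = B.mulVec (φ y) := by
        intro B hB y
        obtain ⟨S, hS⟩ := hΦsurj y
        have h1 : Φr ⟨B * (S : Matrix (Fin n) (Fin n) F), hmm B S hB S.2⟩
            = fun i => B.mulVec (y i) := by
          funext i
          show (B * (S : Matrix (Fin n) (Fin n) F)).mulVec (v i.castSucc) = B.mulVec (y i)
          rw [← Matrix.mulVec_mulVec, ← congrFun hS i]
          rfl
        have h2 : φ (fun i => B.mulVec (y i)) = Ψr ⟨B * (S : Matrix (Fin n) (Fin n) F), hmm B S hB S.2⟩ := by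
          rw [← h1, hfac]
        rw [h2]
        show (B * (S : Matrix (Fin n) (Fin n) F)).mulVec (v (Fin.last k)) = B.mulVec (φ y)
        rw [← Matrix.mulVec_mulVec, ← hS, hfac]
        rfl
      have hcoord : ∀ j : Fin k, ∃ c : F,
          φ.comp (LinearMap.single F (fun _ : Fin k => (Fin n → F)) j) = c • LinearMap.id := by
        intro j
        apply burn_comm 𝒜 hn hyp hA hinv
        intro B hB x
        show φ (Pi.single j (B.mulVec x)) = B.mulVec (φ (Pi.single j x))
        have h4 : (Pi.single j (B.mulVec x) : Fin k → (Fin n → F))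
            = fun i => B.mulVec ((Pi.single j x : Fin k → (Fin n → F)) i) := by
          funext i
          by_cases hij : i = j
          · subst hij; simp
          · simp [Pi.single_apply, hij, Matrix.mulVec_zero]
        rw [h4, key B hB]
      choose c hc using hcoord
      have hT : ∀ T ∈ 𝒜, T.mulVec (v (Fin.last k))
          = ∑ j : Fin k, c j • T.mulVec (v j.castSucc) := by
        intro T hT
        have h5 : T.mulVec (v (Fin.last k)) = φ (Φr ⟨T, hT⟩) := (hfac ⟨T, hT⟩).symm
        have h6 : Φr ⟨T, hT⟩ = ∑ j : Fin k, Pi.single j (T.mulVec (v j.castSucc)) := by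
          funext i
          rw [Finset.sum_apply]
          show T.mulVec (v i.castSucc) = _
          simp [Pi.single_apply]
        rw [h5, h6, map_sum]
        congr 1
        funext j
        have h7 := congrFun (congrArg (fun (ψ : (Fin n → F) →ₗ[F] (Fin n → F)) => ψ.toFun)
          (hc j)) (T.mulVec (v j.castSucc))
        simpa using h7
      have hzero : v (Fin.last k) - ∑ j : Fin k, c j • v j.castSucc = 0 := by
        apply burn_ker 𝒜 hA hinv
        intro T hTm
        rw [Matrix.mulVec_sub, hT T hTm, sub_eq_zero, ← Matrix.mulVecLin_apply, map_sum]
        refine Finset.sum_congr rfl fun j _ => ?_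
        rw [map_smul, Matrix.mulVecLin_apply]
      have hlin := Fintype.linearIndependent_iff.mp hv
        (Fin.snoc (fun j => c j) (-1 : F))
      have h8 : ∑ i : Fin (k+1), (Fin.snoc (fun j => c j) (-1 : F) : Fin (k+1) → F) i • v i = 0 := by
        rw [Fin.sum_univ_castSucc]
        simp only [Fin.snoc_castSucc, Fin.snoc_last]
        rw [neg_one_smul]
        rw [← sub_eq_add_neg] at *
        rw [sub_eq_zero] at hzero ⊢
        exact hzero.symm
      have := hlin h8 (Fin.last k)
      simp at this
    · obtain ⟨T1, hT1m, hT1⟩ := ih _ hvk (fun i => w i.castSucc)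
      have hmem : w (Fin.last k) - T1.mulVec (v (Fin.last k)) ∈ W := htop ▸ Submodule.mem_top
      rw [hWdef, Submodule.mem_map] at hmem
      obtain ⟨⟨T2, hT2m⟩, hker, heq⟩ := hmem
      refine ⟨T1 + T2, add_mem hT1m hT2m, fun i => ?_⟩
      refine Fin.lastCases ?_ ?_ i
      · rw [Matrix.add_mulVec]
        have h9 : T2.mulVec (v (Fin.last k)) = w (Fin.last k) - T1.mulVec (v (Fin.last k)) := heq
        rw [h9]
        abel
      · intro j
        rw [Matrix.add_mulVec, hT1 j]
        have h10 : T2.mulVec (v j.castSucc) = 0 := by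
          rw [LinearMap.mem_ker] at hker
          exact congrFun hker j
        rw [h10, add_zero]

end

/-- If `F` is `k`-closed for every divisor `k > 1` of `n` (every
polynomial of degree `k` over `F` is reducible), then the only irreducible
subalgebra of `M_n(F)` is `M_n(F)` itself. -/
theorem stmt10 {F : Type*} [Field F] {n : ℕ} (hn : 1 < n)
    (hyp : ∀ k : ℕ, 1 < k → k ∣ n →
      ∀ f : Polynomial F, f.natDegree = k → ¬ Irreducible f) :
    ∀ 𝒜 : NonUnitalSubalgebra F (Matrix (Fin n) (Fin n) F),
      (∃ A ∈ 𝒜, A ≠ 0) →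
      (∀ W : Submodule F (Fin n → F),
        (∀ A ∈ 𝒜, ∀ x ∈ W, A.mulVec x ∈ W) → W = ⊥ ∨ W = ⊤) →
      𝒜 = ⊤ := by
  intro 𝒜 hA hinv
  classical
  have hdense := burn_dense 𝒜 hn hyp hA hinv
  refine SetLike.ext fun B => ⟨fun _ => NonUnitalAlgebra.mem_top, fun _ => ?_⟩
  have hbasis : LinearIndependent F (fun i : Fin n => (Pi.single i 1 : Fin n → F)) := by
    have h := (Pi.basisFun F (Fin n)).linearIndependent
    convert h using 1
    funext i
    rw [Pi.basisFun_apply]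
  obtain ⟨T, hTm, hT⟩ := hdense n (fun i => Pi.single i 1) hbasis
    (fun i => B.mulVec (Pi.single i 1))
  have hTB : T = B := by
    ext i j
    have h := congrFun (hT j) i
    simpa [Matrix.mulVec_single] using h
  rwa [← hTB]
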